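/- Every flat module over a ring is a filtered colimit of finitely generated free modules. -/

import Mathlib

open CategoryTheory CategoryTheory.Limits Finsupp

section Lazard
variable (R M : Type) [CommRing R] [AddCommGroup M] [Module R M]

structure LzIdx where
  n : ℕ
  x : (Fin n →₀ R) →ₗ[R] M

variable {R M}

noncomputable instance : Category (LzIdx R M) where
  Hom j k := { g : (Fin j.n →₀ R) →ₗ[R] (Fin k.n →₀ R) // k.x ∘ₗ g = j.x }
  id j := ⟨LinearMap.id, by ext; simp⟩
  comp f g := ⟨g.1 ∘ₗ f.1, by rw [← LinearMap.comp_assoc, g.2, f.2]⟩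

lemma LzIdx.comp_val {j k l : LzIdx R M} (f : j ⟶ k) (g : k ⟶ l) :
    (f ≫ g).1 = g.1 ∘ₗ f.1 := rfl

instance : Nonempty (LzIdx R M) := ⟨⟨0, 0⟩⟩

instance [Module.Flat R M] : IsFilteredOrEmpty (LzIdx R M) where
  cocone_objs j k := by
    refine ⟨⟨j.n + k.n, linearCombination R
        (Fin.append (fun i => j.x (single i 1)) (fun i => k.x (single i 1)))⟩,
      ⟨lmapDomain R R (Fin.castAdd k.n), ?_⟩, ⟨lmapDomain R R (Fin.natAdd j.n), ?_⟩, trivial⟩ <;>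
    · ext i
      simp [Fin.append_left, Fin.append_right, ← map_smul]
  cocone_maps j k f g := by
    have hz : k.x ∘ₗ (f.1 - g.1) = 0 := by
      rw [LinearMap.comp_sub, f.2, g.2, sub_self]
    obtain ⟨κ, a, y, hxy, ha⟩ :=
      Module.Flat.exists_factorization_of_comp_eq_zero_of_free hz
    let e : (Fin κ →₀ R) ≃ₗ[R] (Fin (Fintype.card (Fin κ)) →₀ R) := Finsupp.domLCongr (Fintype.equivFin (Fin κ))
    refine ⟨⟨Fintype.card (Fin κ), y ∘ₗ (e.symm : _ →ₗ[R] _)⟩, ⟨e.toLinearMap ∘ₗ a, ?_⟩, ?_⟩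
    · ext v
      simp [e, hxy]
      congr 1
      ext i
      simp
    · apply Subtype.ext
      rw [LzIdx.comp_val, LzIdx.comp_val]
      ext v
      have h0 := LinearMap.congr_fun ha (single v 1)
      simp only [LinearMap.comp_apply, LinearMap.sub_apply, map_sub, LinearMap.zero_apply] at h0
      rw [sub_eq_zero] at h0
      simp only [LinearMap.comp_apply, lsingle_apply, h0]
  
instance [Module.Flat R M] : IsFiltered (LzIdx R M) := {}

variable (R M) in
noncomputable def LzF : LzIdx R M ⥤ ModuleCat.{0} R where
  obj j := ModuleCat.of R (Fin j.n →₀ R)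
  map f := ModuleCat.ofHom f.1
  map_id _ := rfl
  map_comp _ _ := rfl

variable (R M) in
noncomputable def LzCocone : Cocone (LzF R M) where
  pt := ModuleCat.of R M
  ι := { app := fun j => ModuleCat.ofHom j.x
         naturality := fun j k f => by
           dsimp
           refine Eq.trans ?_ (Category.comp_id _).symm
           exact ModuleCat.hom_ext f.2 }

end Lazard

/-- Govorov–Lazard: every flat module is a filtered colimit of finitely
generated free modules. -/
theorem flat_is_filtered_colimit_of_fg_free
    (R : Type) [CommRing R] (M : Type) [AddCommGroup M] [Module R M]
    (h : Module.Flat R M) :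
    ∃ (J : Type) (_ : SmallCategory J) (_ : IsFiltered J) (F : J ⥤ ModuleCat.{0} R),
      (∀ j : J, Module.Free R (F.obj j) ∧ Module.Finite R (F.obj j)) ∧
      Nonempty (colimit F ≅ ModuleCat.of R M) := by
  refine ⟨LzIdx R M, inferInstance, inferInstance, LzF R M,
    fun j => ⟨inferInstanceAs (Module.Free R (Fin j.n →₀ R)),
      inferInstanceAs (Module.Finite R (Fin j.n →₀ R))⟩, ⟨?_⟩⟩
  let d : colimit (LzF R M) ⟶ ModuleCat.of R M := colimit.desc _ (LzCocone R M)
  have key : ∀ (j : LzIdx R M) (u : (Fin j.n →₀ R)), d.hom ((colimit.ι (LzF R M) j).hom u) = j.x u := by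
    intro j u
    exact congrArg (fun f => ModuleCat.Hom.hom f u) (colimit.ι_desc (LzCocone R M) j)
  have hsurj : Function.Surjective d.hom := by
    intro m
    refine ⟨(colimit.ι (LzF R M) ⟨1, linearCombination R (fun _ : Fin 1 => m)⟩).hom (single (0 : Fin 1) (1 : R)), ?_⟩
    rw [key]
    simp
  have hinj : Function.Injective d.hom := by
    rw [injective_iff_map_eq_zero]
    intro z hz
    obtain ⟨j, u, rfl⟩ : ∃ j, ∃ (u : Fin (LzIdx.n j) →₀ R), (colimit.ι (LzF R M) j).hom u = z :=
      Concrete.colimit_exists_rep (LzF R M) z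
    have hju : j.x u = 0 := by rw [← key]; exact hz
    obtain ⟨κ, a, y, hxy, ha⟩ :=
      Module.Flat.exists_factorization_of_apply_eq_zero_of_free (M := M)
        (N := Fin j.n →₀ R) (f := u) (x := j.x) hju
    let e : (Fin κ →₀ R) ≃ₗ[R] (Fin (Fintype.card (Fin κ)) →₀ R) := Finsupp.domLCongr (Fintype.equivFin (Fin κ))
    let k : LzIdx R M := ⟨Fintype.card (Fin κ), y ∘ₗ (e.symm : _ →ₗ[R] _)⟩
    let g : j ⟶ k := ⟨e.toLinearMap ∘ₗ a, by
      ext v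
      simp [e, k, hxy]
      congr 1
      ext i
      simp⟩
    have hw := congrArg (fun f => ModuleCat.Hom.hom f u) (colimit.w (LzF R M) g)
    have hzero : ((LzF R M).map g).hom u = 0 := by
      show (e.toLinearMap ∘ₗ a) u = 0
      simp [ha]
    refine hw.symm.trans ?_
    show (colimit.ι (LzF R M) k).hom (((LzF R M).map g).hom u) = 0
    rw [hzero, map_zero]
  exact (LinearEquiv.ofBijective d.hom ⟨hinj, hsurj⟩).toModuleIso
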